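/- Let a, b ∈ ℝ³ be unit vectors and let η = η_ab ∈ [0, π] be the angle between them. Then the spherical lune on which ⟨a, s⟩ is positive and ⟨b, s⟩ is negative has normalized measure μ{s ∈ S² : ⟨a, s⟩ > 0 and ⟨b, s⟩ < 0} = η/(2π). (This is the joint probability P^{++}(η) of the outcomes A = sign(⟨a, s⟩) = +1 and B = −sign(⟨b, s⟩) = +1 in Bell's local model.) -/

import Mathlib

open MeasureTheory
open scoped RealInnerProductSpace ENNReal

/-- Euclidean 3-space. -/
noncomputable abbrev E3 := EuclideanSpace ℝ (Fin 3)

/-- The unit sphere `S²` in `ℝ³`. -/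
noncomputable abbrev S2 := Metric.sphere (0 : E3) 1

/-- The (unnormalized) rotation-invariant surface measure on `S²`. -/
noncomputable def sphereMeasure : Measure S2 := (volume : Measure E3).toSphere

/-- The uniform probability measure on `S²`: the rotation-invariant surface measure
normalized to total mass 1. -/
noncomputable def uniformS2 : Measure S2 := (sphereMeasure Set.univ)⁻¹ • sphereMeasure

open Real Set
open scoped Pointwise

lemma angle_mem_iff {η θ : ℝ} (h0 : 0 ≤ η) (hπ : η ≤ π) (hθ : θ ∈ Ioo (-π) π) :
    (0 < Real.cos θ ∧ Real.cos (θ - η) < 0) ↔ θ ∈ Ioo (-(π/2)) (η - π/2) := by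
  constructor
  · rintro ⟨h1, h2⟩
    have hu : θ < π/2 := by
      by_contra hlt
      push_neg at hlt
      have : Real.cos θ ≤ 0 :=
        Real.cos_nonpos_of_pi_div_two_le_of_le hlt (by have := hθ.2; linarith [Real.pi_pos])
      linarith
    constructor
    · by_contra hlt
      push_neg at hlt
      have : Real.cos θ ≤ 0 := by
        have := Real.cos_nonpos_of_pi_div_two_le_of_le (x := -θ) (by linarith) (by
          have := hθ.1; linarith [Real.pi_pos])
        rwa [Real.cos_neg] at this
      linarith
    · by_contra hlt
      push_neg at hlt
      have h3 : Real.cos (θ - η) ≥ 0 :=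
        Real.cos_nonneg_of_mem_Icc ⟨by linarith, by linarith⟩
      linarith
  · rintro ⟨h1, h2⟩
    refine ⟨Real.cos_pos_of_mem_Ioo ⟨h1, by linarith⟩, ?_⟩
    rw [← Real.cos_neg, neg_sub]
    exact Real.cos_neg_of_pi_div_two_lt_of_lt (by linarith) (by linarith)

lemma wedge_prod_volume {η : ℝ} (h0 : 0 ≤ η) (hπ : η ≤ π) :
    volume {p : ℝ × ℝ | 0 < p.1 ∧ Real.cos η * p.1 + Real.sin η * p.2 < 0 ∧
      p.1 ^ 2 + p.2 ^ 2 < 1} = ENNReal.ofReal (η / 2) := by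
  set K : Set (ℝ × ℝ) := {p : ℝ × ℝ | 0 < p.1 ∧ Real.cos η * p.1 + Real.sin η * p.2 < 0 ∧
      p.1 ^ 2 + p.2 ^ 2 < 1} with hK
  have hc1 : Continuous fun p : ℝ × ℝ => Real.cos η * p.1 + Real.sin η * p.2 :=
    (continuous_const.mul continuous_fst).add (continuous_const.mul continuous_snd)
  have hc2 : Continuous fun p : ℝ × ℝ => p.1 ^ 2 + p.2 ^ 2 :=
    (continuous_fst.pow 2).add (continuous_snd.pow 2)
  have hKopen : IsOpen K :=
    (isOpen_lt continuous_const continuous_fst).inter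
      ((isOpen_lt hc1 continuous_const).inter (isOpen_lt hc2 continuous_const))
  have hKm : MeasurableSet K := hKopen.measurableSet
  have hKsub : K ⊆ Metric.closedBall 0 1 := by
    rintro ⟨x, y⟩ ⟨-, -, h3⟩
    have hx : |x| ≤ 1 := by nlinarith [sq_nonneg x, sq_nonneg y, abs_nonneg x, sq_abs x]
    have hy : |y| ≤ 1 := by nlinarith [sq_nonneg x, sq_nonneg y, abs_nonneg y, sq_abs y]
    simp only [Metric.mem_closedBall, dist_zero_right, Prod.norm_def]
    simp [Real.norm_eq_abs, hx, hy]
  have hKfin : volume K ≠ ⊤ :=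
    ((measure_mono hKsub).trans_lt (isCompact_closedBall _ _).measure_lt_top).ne
  have key : ∫ p : ℝ × ℝ, K.indicator (1 : ℝ × ℝ → ℝ) p = η / 2 := by
    rw [← integral_comp_polarCoord_symm]
    have heq : EqOn (fun p : ℝ × ℝ => p.1 • K.indicator (1 : ℝ × ℝ → ℝ) (polarCoord.symm p))
        (fun p : ℝ × ℝ => (Ioo (0:ℝ) 1).indicator id p.1 *
          (Ioo (-(π/2)) (η - π/2)).indicator (1 : ℝ → ℝ) p.2) polarCoord.target := by
      rintro ⟨r, θ⟩ hp
      rw [polarCoord_target, mem_prod] at hp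
      have hr : (0:ℝ) < r := hp.1
      have hθ : θ ∈ Ioo (-π) π := hp.2
      have hsymm : polarCoord.symm (r, θ) = (r * Real.cos θ, r * Real.sin θ) := rfl
      have hid : (r * Real.cos θ) ^ 2 + (r * Real.sin θ) ^ 2 = r ^ 2 := by
        rw [mul_pow, mul_pow, ← mul_add, Real.cos_sq_add_sin_sq, mul_one]
      have hmem : ((r * Real.cos θ, r * Real.sin θ) : ℝ × ℝ) ∈ K ↔
          r ∈ Ioo (0:ℝ) 1 ∧ θ ∈ Ioo (-(π/2)) (η - π/2) := by
        rw [← angle_mem_iff h0 hπ hθ]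
        constructor
        · rintro ⟨h1, h2, h3⟩
          simp only [mem_setOf_eq] at h1 h2 h3
          have hc : 0 < Real.cos θ := by
            by_contra hcc
            push_neg at hcc
            nlinarith
          have hcs : Real.cos (θ - η) < 0 := by rw [Real.cos_sub]; nlinarith
          have hr1 : r < 1 := by nlinarith [hid]
          exact ⟨⟨hr, hr1⟩, hc, hcs⟩
        · rintro ⟨⟨-, hr1⟩, hc, hcs⟩
          rw [Real.cos_sub] at hcs
          have h2 := mul_neg_of_pos_of_neg hr hcs
          refine ⟨by simpa using mul_pos hr hc, ?_, ?_⟩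
          · simp only [mem_setOf_eq]; nlinarith
          · simp only [mem_setOf_eq]; nlinarith [hid]
      show r • K.indicator (1 : ℝ × ℝ → ℝ) (polarCoord.symm (r, θ)) = _
      rw [hsymm]
      by_cases hmem' : ((r * Real.cos θ, r * Real.sin θ) : ℝ × ℝ) ∈ K
      · obtain ⟨hr1, hθ1⟩ := hmem.1 hmem'
        simp [indicator_of_mem, hmem', hr1, hθ1]
      · have hno := hmem.not.1 hmem'
        rw [not_and_or] at hno
        rcases hno with h | h
        · simp [indicator_of_notMem, hmem', h]
        · simp [indicator_of_notMem, hmem', h]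
    rw [setIntegral_congr_fun
      (by rw [polarCoord_target]; exact measurableSet_Ioi.prod measurableSet_Ioo) heq,
      polarCoord_target, Measure.volume_eq_prod, setIntegral_prod_mul]
    rw [setIntegral_indicator measurableSet_Ioo, setIntegral_indicator measurableSet_Ioo]
    have e1 : Ioi (0:ℝ) ∩ Ioo 0 1 = Ioo (0:ℝ) 1 := by
      rw [inter_eq_right.2]; exact Ioo_subset_Ioi_self
    have e2 : Ioo (-π) π ∩ Ioo (-(π/2)) (η - π/2) = Ioo (-(π/2)) (η - π/2) := by
      rw [inter_eq_right.2]
      apply Ioo_subset_Ioo <;> linarith [Real.pi_pos]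
    rw [e1, e2]
    have i1 : ∫ x in Ioo (0:ℝ) 1, id x = 1/2 := by
      rw [← MeasureTheory.integral_Ioc_eq_integral_Ioo,
        ← intervalIntegral.integral_of_le zero_le_one]
      simp [integral_id]
    have i2 : ∫ _x in Ioo (-(π/2)) (η - π/2), (1 : ℝ → ℝ) _x = η := by
      simp only [Pi.one_apply, setIntegral_const, smul_eq_mul, mul_one]
      rw [measureReal_def, Real.volume_Ioo, ENNReal.toReal_ofReal (by linarith)]
      ring
    rw [i1, i2]; ring
  have hfin : (volume K).toReal = η / 2 := by
    rw [← key, integral_indicator_one hKm, measureReal_def]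
  rw [← hfin, ENNReal.ofReal_toReal hKfin]

variable (c s : ℝ)

/-- wedge ∩ disk of squared radius ρ, in `Fin 2 → ℝ`. -/
def WD (c s ρ : ℝ) : Set (Fin 2 → ℝ) :=
  {y | 0 < y 0 ∧ c * y 0 + s * y 1 < 0 ∧ (y 0) ^ 2 + (y 1) ^ 2 < ρ}

lemma WD_open (ρ : ℝ) : IsOpen (WD c s ρ) := by
  have h0 : Continuous fun y : Fin 2 → ℝ => y 0 := continuous_apply 0
  have h1 : Continuous fun y : Fin 2 → ℝ => y 1 := continuous_apply 1
  exact (isOpen_lt continuous_const h0).inter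
    ((isOpen_lt ((continuous_const.mul h0).add (continuous_const.mul h1))
      continuous_const).inter
      (isOpen_lt ((h0.pow 2).add (h1.pow 2)) continuous_const))

lemma WD_scaled {R : ℝ} (hR : 0 < R) : WD c s (R ^ 2) = R • WD c s 1 := by
  ext y
  constructor
  · rintro ⟨h1, h2, h3⟩
    refine ⟨R⁻¹ • y, ⟨?_, ?_, ?_⟩, smul_inv_smul₀ hR.ne' y⟩
    · simp only [Pi.smul_apply, smul_eq_mul]
      positivity
    · simp only [Pi.smul_apply, smul_eq_mul]
      have : R⁻¹ * (c * y 0 + s * y 1) < 0 :=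
        mul_neg_of_pos_of_neg (by positivity) h2
      nlinarith
    · simp only [Pi.smul_apply, smul_eq_mul]
      have hR2 : (0:ℝ) < R ^ 2 := by positivity
      rw [mul_pow, mul_pow, ← mul_add]
      calc R⁻¹ ^ 2 * ((y 0) ^ 2 + (y 1) ^ 2) < R⁻¹ ^ 2 * R ^ 2 := by
            apply mul_lt_mul_of_pos_left h3 (by positivity)
        _ = 1 := by field_simp
  · rintro ⟨z, ⟨h1, h2, h3⟩, rfl⟩
    refine ⟨?_, ?_, ?_⟩
    · simp only [Pi.smul_apply, smul_eq_mul]; positivity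
    · simp only [Pi.smul_apply, smul_eq_mul]
      have : R * (c * z 0 + s * z 1) < 0 := mul_neg_of_pos_of_neg hR h2
      nlinarith
    · simp only [Pi.smul_apply, smul_eq_mul]
      rw [mul_pow, mul_pow, ← mul_add]
      have hR2 : (0:ℝ) < R ^ 2 := by positivity
      nlinarith

lemma WD_slice_volume (t : ℝ) :
    volume (WD c s (1 - t ^ 2)) = ENNReal.ofReal (1 - t ^ 2) * volume (WD c s 1) := by
  rcases lt_or_ge (t ^ 2) 1 with h | h
  · have h1 : (0:ℝ) < 1 - t ^ 2 := by linarith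
    set R := Real.sqrt (1 - t ^ 2) with hRdef
    have hRpos : 0 < R := Real.sqrt_pos.2 h1
    have hR2 : R ^ 2 = 1 - t ^ 2 := Real.sq_sqrt h1.le
    rw [← hR2, WD_scaled c s hRpos, Measure.addHaar_smul_of_nonneg volume hRpos.le,
      Module.finrank_pi, Fintype.card_fin, hR2]
  · have he : WD c s (1 - t ^ 2) = ∅ := by
      ext y
      simp only [WD, mem_setOf_eq, mem_empty_iff_false, iff_false, not_and]
      intro hy0 _
      nlinarith [sq_nonneg (y 0), sq_nonneg (y 1)]
    rw [he, measure_empty, ENNReal.ofReal_eq_zero.2 (by linarith), zero_mul]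

lemma vol3_eq :
    volume {x : Fin 3 → ℝ | 0 < x 0 ∧ c * x 0 + s * x 1 < 0 ∧
        (x 0) ^ 2 + (x 1) ^ 2 + (x 2) ^ 2 < 1}
      = volume (WD c s 1) * ENNReal.ofReal (4 / 3) := by
  have h0 : Continuous fun q : ℝ × (Fin 2 → ℝ) => q.2 0 := (continuous_apply 0).comp continuous_snd
  have h1 : Continuous fun q : ℝ × (Fin 2 → ℝ) => q.2 1 := (continuous_apply 1).comp continuous_snd
  set S' : Set (ℝ × (Fin 2 → ℝ)) := {q | 0 < q.2 0 ∧ c * q.2 0 + s * q.2 1 < 0 ∧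
      (q.2 0) ^ 2 + (q.2 1) ^ 2 + q.1 ^ 2 < 1} with hS'def
  have hS'open : IsOpen S' :=
    (isOpen_lt continuous_const h0).inter
      ((isOpen_lt ((continuous_const.mul h0).add (continuous_const.mul h1))
        continuous_const).inter
        (isOpen_lt (((h0.pow 2).add (h1.pow 2)).add (continuous_fst.pow 2)) continuous_const))
  have hpre : (MeasurableEquiv.piFinSuccAbove (fun _ : Fin 3 => ℝ) 2) ⁻¹' S'
      = {x : Fin 3 → ℝ | 0 < x 0 ∧ c * x 0 + s * x 1 < 0 ∧
        (x 0) ^ 2 + (x 1) ^ 2 + (x 2) ^ 2 < 1} := rfl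
  have mp := measurePreserving_piFinSuccAbove (fun _ : Fin 3 => (volume : Measure ℝ)) 2
  have hmv := mp.measure_preimage (s := S') hS'open.measurableSet.nullMeasurableSet
  rw [volume_pi, ← hpre, hmv, Measure.prod_apply hS'open.measurableSet]
  have hslice : ∀ t : ℝ, (Measure.pi fun _ : Fin 2 => (volume : Measure ℝ))
      (Prod.mk t ⁻¹' S') = ENNReal.ofReal (1 - t ^ 2) * volume (WD c s 1) := by
    intro t
    have : Prod.mk t ⁻¹' S' = WD c s (1 - t ^ 2) := by
      ext y
      simp only [hS'def, mem_preimage, mem_setOf_eq, WD]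
      constructor
      · rintro ⟨h1, h2, h3⟩; exact ⟨h1, h2, by linarith⟩
      · rintro ⟨h1, h2, h3⟩; exact ⟨h1, h2, by linarith⟩
    rw [this, ← volume_pi, WD_slice_volume]
  rw [lintegral_congr hslice]
  rw [lintegral_mul_const' (volume (WD c s 1)) _ ?_]
  · rw [mul_comm]
    congr 1
    have hind : (fun t : ℝ => ENNReal.ofReal (1 - t ^ 2))
        = (Ioo (-1 : ℝ) 1).indicator (fun t => ENNReal.ofReal (1 - t ^ 2)) := by
      ext t
      by_cases ht : t ∈ Ioo (-1 : ℝ) 1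
      · rw [indicator_of_mem ht]
      · rw [indicator_of_notMem ht, ENNReal.ofReal_eq_zero]
        rw [mem_Ioo, not_and_or] at ht
        push_neg at ht
        rcases ht with h | h <;> nlinarith
    rw [hind, lintegral_indicator measurableSet_Ioo]
    have hint : IntegrableOn (fun t : ℝ => 1 - t ^ 2) (Ioo (-1) 1) :=
      ((continuous_const.sub (continuous_pow 2)).integrableOn_Icc).mono_set Ioo_subset_Icc_self
    have hnn : 0 ≤ᵐ[volume.restrict (Ioo (-1:ℝ) 1)] fun t : ℝ => 1 - t ^ 2 :=
      (ae_restrict_iff' measurableSet_Ioo).2 (ae_of_all _ fun t ht => by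
        rw [mem_Ioo] at ht; simp only [Pi.zero_apply]; nlinarith [ht.1, ht.2])
    rw [← ofReal_integral_eq_lintegral_ofReal hint hnn]
    congr 1
    rw [← MeasureTheory.integral_Ioc_eq_integral_Ioo,
      ← intervalIntegral.integral_of_le (by norm_num : (-1:ℝ) ≤ 1)]
    rw [intervalIntegral.integral_sub intervalIntegrable_const (intervalIntegral.intervalIntegrable_pow 2)]
    simp [integral_pow]
    norm_num
  · refine (measure_mono (?_ : WD c s 1 ⊆ Metric.closedBall 0 1)).trans_lt
      (isCompact_closedBall _ _).measure_lt_top |>.ne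
    rintro y ⟨-, -, h3⟩
    rw [Metric.mem_closedBall, dist_zero_right]
    rw [pi_norm_le_iff_of_nonneg zero_le_one]
    intro i
    fin_cases i
    · show ‖y 0‖ ≤ 1
      rw [Real.norm_eq_abs, abs_le]
      constructor <;> nlinarith [sq_nonneg (y 0), sq_nonneg (y 1)]
    · show ‖y 1‖ ≤ 1
      rw [Real.norm_eq_abs, abs_le]
      constructor <;> nlinarith [sq_nonneg (y 0), sq_nonneg (y 1)]

open InnerProductGeometry in
lemma exists_unit_orthogonal (a b : EuclideanSpace ℝ (Fin 3)) (ha : ‖a‖ = 1) (hb : ‖b‖ = 1) :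
    ∃ u : EuclideanSpace ℝ (Fin 3), ‖u‖ = 1 ∧ ⟪a, u⟫ = 0 ∧
      b = Real.cos (angle a b) • a + Real.sin (angle a b) • u := by
  have hcos : Real.cos (angle a b) = ⟪a, b⟫ := by
    rw [cos_angle, ha, hb]; norm_num
  set t : ℝ := ⟪a, b⟫ with ht
  set s : ℝ := Real.sin (angle a b) with hs
  have hs0 : 0 ≤ s := Real.sin_nonneg_of_nonneg_of_le_pi (angle_nonneg a b) (angle_le_pi a b)
  have hs2 : s ^ 2 = 1 - t ^ 2 := by
    have := Real.sin_sq_add_cos_sq (angle a b)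
    rw [hcos] at this; linarith
  have haa : ⟪a, a⟫ = 1 := by
    rw [real_inner_self_eq_norm_sq, ha]; norm_num
  set w : EuclideanSpace ℝ (Fin 3) := b - t • a with hw
  have haw : ⟪a, w⟫ = 0 := by
    rw [hw, inner_sub_right, real_inner_smul_right, haa]
    ring
  have hnw : ‖w‖ ^ 2 = s ^ 2 := by
    rw [hw, norm_sub_sq_real, real_inner_smul_right, norm_smul, hb, ha,
      Real.norm_eq_abs, mul_one, sq_abs]
    have hba : ⟪b, a⟫ = t := by rw [real_inner_comm]
    rw [hba]
    linarith [hs2]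
  rcases eq_or_ne s 0 with hs' | hs'
  · -- b = t • a; pick any unit vector orthogonal to a
    have hw0 : w = 0 := by
      have : ‖w‖ ^ 2 = 0 := by rw [hnw, hs']; ring
      have := pow_eq_zero_iff (n := 2) (by norm_num) |>.1 this
      exact norm_eq_zero.1 this
    have hortho : Orthonormal ℝ (Set.restrict {(0 : Fin 3)} (fun _ => a)) := by
      rw [orthonormal_iff_ite]
      rintro ⟨i, hi⟩ ⟨j, hj⟩
      simp only [Set.mem_singleton_iff] at hi hj
      subst hi; subst hj
      simp [Set.restrict, haa, ha]
    obtain ⟨B, hB⟩ := hortho.exists_orthonormalBasis_extension_of_card_eq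
      (by simp [finrank_euclideanSpace_fin])
    refine ⟨B 1, B.orthonormal.1 1, ?_, ?_⟩
    · have h01 := B.orthonormal.2 (show (0 : Fin 3) ≠ 1 by decide)
      simp only at h01
      rwa [hB 0 rfl] at h01
    · rw [hcos, hs', zero_smul, add_zero]
      rw [hw] at hw0
      exact sub_eq_zero.1 hw0
  · refine ⟨s⁻¹ • w, ?_, ?_, ?_⟩
    · have hnw' : ‖w‖ = s := by
        have := congrArg Real.sqrt hnw
        rwa [Real.sqrt_sq (norm_nonneg w), Real.sqrt_sq hs0] at this
      rw [norm_smul, Real.norm_eq_abs, abs_inv, abs_of_nonneg hs0, hnw']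
      field_simp
    · rw [real_inner_smul_right, haw, mul_zero]
    · rw [hcos, smul_smul, mul_inv_cancel₀ hs', one_smul, hw]
      module

lemma WD_volume {η : ℝ} (h0 : 0 ≤ η) (hπ : η ≤ π) :
    volume (WD (Real.cos η) (Real.sin η) 1) = ENNReal.ofReal (η / 2) := by
  have hc1 : Continuous fun p : ℝ × ℝ => Real.cos η * p.1 + Real.sin η * p.2 :=
    (continuous_const.mul continuous_fst).add (continuous_const.mul continuous_snd)
  have hc2 : Continuous fun p : ℝ × ℝ => p.1 ^ 2 + p.2 ^ 2 :=
    (continuous_fst.pow 2).add (continuous_snd.pow 2)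
  have hm : MeasurableSet {p : ℝ × ℝ | 0 < p.1 ∧ Real.cos η * p.1 + Real.sin η * p.2 < 0 ∧
      p.1 ^ 2 + p.2 ^ 2 < 1} :=
    ((isOpen_lt continuous_const continuous_fst).inter
      ((isOpen_lt hc1 continuous_const).inter
        (isOpen_lt hc2 continuous_const))).measurableSet
  have hpre : (MeasurableEquiv.finTwoArrow : (Fin 2 → ℝ) ≃ᵐ ℝ × ℝ) ⁻¹'
      {p : ℝ × ℝ | 0 < p.1 ∧ Real.cos η * p.1 + Real.sin η * p.2 < 0 ∧
        p.1 ^ 2 + p.2 ^ 2 < 1} = WD (Real.cos η) (Real.sin η) 1 := rfl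
  rw [← wedge_prod_volume h0 hπ,
    ← (volume_preserving_finTwoArrow ℝ).measure_preimage hm.nullMeasurableSet, hpre]

open InnerProductGeometry in
lemma cone_volume (a b : EuclideanSpace ℝ (Fin 3)) (ha : ‖a‖ = 1) (hb : ‖b‖ = 1) :
    volume {x : EuclideanSpace ℝ (Fin 3) | 0 < ⟪a, x⟫ ∧ ⟪b, x⟫ < 0 ∧ ‖x‖ < 1}
      = ENNReal.ofReal (angle a b / 2) * ENNReal.ofReal (4 / 3) := by
  obtain ⟨u, hu1, hau, hdecomp⟩ := exists_unit_orthogonal a b ha hb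
  set η : ℝ := angle a b with hη
  set t : ℝ := Real.cos η with htdef
  set s : ℝ := Real.sin η with hsdef
  have haa : ⟪a, a⟫ = (1:ℝ) := by rw [real_inner_self_eq_norm_sq, ha]; norm_num
  have huu : ⟪u, u⟫ = (1:ℝ) := by rw [real_inner_self_eq_norm_sq, hu1]; norm_num
  have hua : ⟪u, a⟫ = (0:ℝ) := by rw [real_inner_comm]; exact hau
  have hortho : Orthonormal ℝ (Set.restrict ({0, 1} : Set (Fin 3)) ![a, u, 0]) := by
    rw [orthonormal_iff_ite]
    rintro ⟨i, hi⟩ ⟨j, hj⟩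
    simp only [Set.mem_insert_iff, Set.mem_singleton_iff] at hi hj
    rcases hi with rfl | rfl <;> rcases hj with rfl | rfl <;>
      simp [Set.restrict, Set.restrict_apply, haa, huu, hau, hua, Subtype.mk.injEq, ha, hu1]
  obtain ⟨B, hB⟩ := hortho.exists_orthonormalBasis_extension_of_card_eq
    (by simp [finrank_euclideanSpace_fin])
  have hB0 : B 0 = a := by simpa using hB 0 (by simp)
  have hB1 : B 1 = u := by simpa using hB 1 (by simp)
  have hax : ∀ x : EuclideanSpace ℝ (Fin 3), ⟪a, x⟫ = B.repr x 0 := fun x => by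
    rw [OrthonormalBasis.repr_apply_apply, hB0]
  have hbx : ∀ x : EuclideanSpace ℝ (Fin 3), ⟪b, x⟫ = t * B.repr x 0 + s * B.repr x 1 :=
    fun x => by
    rw [OrthonormalBasis.repr_apply_apply, OrthonormalBasis.repr_apply_apply, hB0, hB1,
      ← real_inner_smul_left, ← real_inner_smul_left, ← inner_add_left, ← hdecomp]
  set P : Set (EuclideanSpace ℝ (Fin 3)) :=
    {y | 0 < y 0 ∧ t * y 0 + s * y 1 < 0 ∧ ‖y‖ < 1} with hPdef
  have hPopen : IsOpen P := by
    have h0 : Continuous fun y : EuclideanSpace ℝ (Fin 3) => y 0 :=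
      (EuclideanSpace.proj (0 : Fin 3)).continuous
    have h1 : Continuous fun y : EuclideanSpace ℝ (Fin 3) => y 1 :=
      (EuclideanSpace.proj (1 : Fin 3)).continuous
    exact (isOpen_lt continuous_const h0).inter
      ((isOpen_lt ((continuous_const.mul h0).add (continuous_const.mul h1)) continuous_const).inter
        (isOpen_lt continuous_norm continuous_const))
  have hsetE : {x : EuclideanSpace ℝ (Fin 3) | 0 < ⟪a, x⟫ ∧ ⟪b, x⟫ < 0 ∧ ‖x‖ < 1}
      = ⇑B.repr ⁻¹' P := by
    ext x
    have hn : ‖B.repr x‖ = ‖x‖ := B.repr.norm_map x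
    simp only [Set.mem_setOf_eq, Set.mem_preimage, hPdef, hax, hbx, hn]
  rw [hsetE, B.measurePreserving_repr.measure_preimage hPopen.measurableSet.nullMeasurableSet]
  have hS3 : P = (MeasurableEquiv.toLp 2 (Fin 3 → ℝ)).symm ⁻¹'
      {x : Fin 3 → ℝ | 0 < x 0 ∧ t * x 0 + s * x 1 < 0 ∧
        (x 0) ^ 2 + (x 1) ^ 2 + (x 2) ^ 2 < 1} := by
    ext y
    simp only [hPdef, Set.mem_setOf_eq, Set.mem_preimage]
    have hnorm : ‖y‖ < 1 ↔ (y 0) ^ 2 + (y 1) ^ 2 + (y 2) ^ 2 < 1 := by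
      rw [EuclideanSpace.norm_eq]
      rw [show ∑ i, ‖y i‖ ^ 2 = (y 0) ^ 2 + (y 1) ^ 2 + (y 2) ^ 2 by
        simp [Fin.sum_univ_three, Real.norm_eq_abs, sq_abs]]
      rw [Real.sqrt_lt' one_pos, one_pow]
    rw [hnorm]
    exact Iff.rfl
  rw [hS3, (EuclideanSpace.volume_preserving_symm_measurableEquiv_toLp (Fin 3)).measure_preimage ?_]
  · rw [vol3_eq t s, WD_volume (angle_nonneg a b) (angle_le_pi a b), mul_comm] -- check η
  · have h0 : Continuous fun x : Fin 3 → ℝ => x 0 := continuous_apply 0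
    have h1 : Continuous fun x : Fin 3 → ℝ => x 1 := continuous_apply 1
    have h2 : Continuous fun x : Fin 3 → ℝ => x 2 := continuous_apply 2
    exact ((isOpen_lt continuous_const h0).inter
      ((isOpen_lt ((continuous_const.mul h0).add (continuous_const.mul h1)) continuous_const).inter
        (isOpen_lt (((h0.pow 2).add (h1.pow 2)).add (h2.pow 2))
          continuous_const))).measurableSet.nullMeasurableSet
lemma ball_volume_E3 : (volume : Measure E3) (Metric.ball 0 1) = ENNReal.ofReal (4 * π / 3) := by
  rw [EuclideanSpace.volume_ball (Fin 3) 0 1]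
  rw [ENNReal.ofReal_one, one_pow, one_mul]
  congr 1
  have h32 : ((Fintype.card (Fin 3) : ℝ) / 2 + 1) = 3/2 + 1 := by norm_num
  rw [h32, Real.Gamma_add_one (by norm_num), show (3:ℝ)/2 = 1/2 + 1 by norm_num,
    Real.Gamma_add_one (by norm_num), Real.Gamma_one_half_eq]
  have hs : Real.sqrt π ^ Fintype.card (Fin 3) = π * Real.sqrt π := by
    rw [show Fintype.card (Fin 3) = 3 by simp, pow_succ, Real.sq_sqrt Real.pi_pos.le]
  rw [hs]
  have hπ : Real.sqrt π ≠ 0 := (Real.sqrt_pos.2 Real.pi_pos).ne'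
  field_simp
  ring

/-- For unit vectors `a, b` with angle `η` between them, the lune where `⟪a, s⟫ > 0` and
`⟪b, s⟫ < 0` has uniform measure `η/(2π)`; this is the joint probability `P⁺⁺(η)` in
Bell's local model. -/
theorem lune_pm_measure (a b : E3) (ha : ‖a‖ = 1) (hb : ‖b‖ = 1) :
    uniformS2 {s : S2 | 0 < ⟪a, (s : E3)⟫ ∧ ⟪b, (s : E3)⟫ < 0}
      = ENNReal.ofReal (InnerProductGeometry.angle a b / (2 * Real.pi)) := by
  set η : ℝ := InnerProductGeometry.angle a b with hη
  set L : Set S2 := {s : S2 | 0 < ⟪a, (s : E3)⟫ ∧ ⟪b, (s : E3)⟫ < 0} with hL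
  have hcont1 : Continuous fun s : S2 => ⟪a, (s : E3)⟫ :=
    Continuous.inner continuous_const continuous_subtype_val
  have hcont2 : Continuous fun s : S2 => ⟪b, (s : E3)⟫ :=
    Continuous.inner continuous_const continuous_subtype_val
  have hLm : MeasurableSet L :=
    (measurableSet_lt measurable_const hcont1.measurable).inter
      (measurableSet_lt hcont2.measurable measurable_const)
  have hsmul : Set.Ioo (0:ℝ) 1 • ((↑) '' L : Set E3)
      = {x : E3 | 0 < ⟪a, x⟫ ∧ ⟪b, x⟫ < 0 ∧ ‖x‖ < 1} := by
    ext x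
    constructor
    · intro hx
      rw [Set.mem_smul] at hx
      obtain ⟨r, hr, v, hv, rfl⟩ := hx
      obtain ⟨⟨v', hv'⟩, hvL, rfl⟩ := hv
      obtain ⟨h1, h2⟩ := hvL
      rw [Set.mem_Ioo] at hr
      refine ⟨?_, ?_, ?_⟩
      · rw [real_inner_smul_right]; exact mul_pos hr.1 h1
      · rw [real_inner_smul_right]; exact mul_neg_of_pos_of_neg hr.1 h2
      · rw [norm_smul, Real.norm_eq_abs, abs_of_pos hr.1,
          mem_sphere_zero_iff_norm.1 hv', mul_one]
        exact hr.2
    · rintro ⟨h1, h2, h3⟩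
      have hx0 : x ≠ 0 := by
        rintro rfl
        rw [inner_zero_right] at h1
        exact lt_irrefl 0 h1
      have hnx : 0 < ‖x‖ := norm_pos_iff.2 hx0
      have hsph : ‖x‖⁻¹ • x ∈ Metric.sphere (0 : E3) 1 := by
        rw [mem_sphere_zero_iff_norm, norm_smul, Real.norm_eq_abs, abs_inv,
          abs_of_pos hnx, inv_mul_cancel₀ hnx.ne']
      rw [Set.mem_smul]
      refine ⟨‖x‖, Set.mem_Ioo.2 ⟨hnx, h3⟩, ‖x‖⁻¹ • x,
        ⟨⟨‖x‖⁻¹ • x, hsph⟩, ⟨?_, ?_⟩, rfl⟩, ?_⟩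
      · rw [real_inner_smul_right]
        exact mul_pos (inv_pos.2 hnx) h1
      · rw [real_inner_smul_right]
        exact mul_neg_of_pos_of_neg (inv_pos.2 hnx) h2
      · rw [smul_smul, mul_inv_cancel₀ hnx.ne', one_smul]
  have hdim : (Module.finrank ℝ E3 : ℝ≥0∞) = 3 := by
    rw [finrank_euclideanSpace_fin]; norm_num
  have hsphL : sphereMeasure L
      = 3 * (ENNReal.ofReal (η / 2) * ENNReal.ofReal (4 / 3)) := by
    rw [sphereMeasure, Measure.toSphere_apply' _ hLm, hsmul, hdim, cone_volume a b ha hb]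
  have hsphU : sphereMeasure Set.univ = 3 * ENNReal.ofReal (4 * π / 3) := by
    rw [sphereMeasure, Measure.toSphere_apply_univ, hdim, ball_volume_E3]
  have hη0 : 0 ≤ η := InnerProductGeometry.angle_nonneg a b
  rw [uniformS2, Measure.smul_apply, smul_eq_mul, hsphL, hsphU]
  rw [show (3 : ℝ≥0∞) = ENNReal.ofReal 3 by norm_num]
  rw [← ENNReal.ofReal_mul (by norm_num : (0:ℝ) ≤ 3),
    ← ENNReal.ofReal_mul (div_nonneg hη0 (by norm_num)),
    ← ENNReal.ofReal_mul (by norm_num : (0:ℝ) ≤ 3)]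
  rw [show (3 : ℝ) * (4 * π / 3) = 4 * π by ring]
  rw [← ENNReal.ofReal_inv_of_pos (by positivity : (0:ℝ) < 4 * π),
    ← ENNReal.ofReal_mul (by positivity)]
  congr 1
  rw [show (3 : ℝ) * (η / 2 * (4 / 3)) = 2 * η by ring]
  rw [eq_div_iff (by positivity : (2 : ℝ) * π ≠ 0)]
  field_simp
  ring
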